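/- Let G be a finite subgroup of the orthogonal group of Euclidean ℝ³ such that 0 is the only vector fixed by every element of G. Let v ∈ S² and define F : S² → ℝ by F(w) = Σ_{g∈G} η((1 + ⟨g w, v⟩)/2). Let u ∈ S² satisfy u = −g₀ v for some g₀ ∈ G, and assume that the only vector orthogonal to u fixed by every element of Stab_G(u) = {g ∈ G : g u = u} is 0. Then u is a strict local minimizer of F on S²: there is a neighborhood V of u in S² such that F(u) < F(w) for every w ∈ V with w ≠ u. -/

import Mathlib

abbrev E3 := EuclideanSpace ℝ (Fin 3)

lemma eta_taylor {δ s t : ℝ} (hδ : 0 < δ) (hs : δ ≤ s) (ht : 0 < t) :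
    -(Real.log s + 1) * (t - s) - (t - s)^2 / δ ≤ Real.negMulLog t - Real.negMulLog s := by
  have hs0 : 0 < s := hδ.trans_le hs
  have h1 : Real.log (t/s) ≤ t/s - 1 := Real.log_le_sub_one_of_pos (by positivity)
  have h2 : Real.log (t/s) = Real.log t - Real.log s := Real.log_div ht.ne' hs0.ne'
  have h3 : (t-s)^2 / s ≤ (t-s)^2 / δ :=
    div_le_div_of_nonneg_left (by positivity) hδ hs
  have key : -((t-s)^2/s) ≤ Real.negMulLog t - Real.negMulLog s + (Real.log s + 1) * (t - s) := by
    have e1 : Real.negMulLog t - Real.negMulLog s + (Real.log s + 1) * (t - s)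
        = -t * Real.log (t/s) + (t - s) := by
      simp [Real.negMulLog, h2]; ring
    rw [e1]
    have h4 : -t * (t/s - 1) ≤ -t * Real.log (t/s) := by
      nlinarith [mul_le_mul_of_nonneg_left h1 ht.le]
    have e2 : -t * (t/s-1) + (t-s) = -((t-s)^2/s) := by field_simp; ring
    linarith
  have h3' : -((t-s)^2/δ) ≤ -((t-s)^2/s) := neg_le_neg h3
  linarith

set_option maxHeartbeats 1000000 in
/-- Michel-type criterion, part 1: if `u = −g₀v` for some `g₀ ∈ G`, then `u` is a strict
local minimizer on the sphere of the entropy function `F(w) = Σ_{g∈G} η((1+⟨gw,v⟩)/2)`. -/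
theorem stmt_9 (G : Subgroup (E3 ≃ₗᵢ[ℝ] E3)) [Fintype G]
    (hfix : ∀ x : E3, (∀ g : G, (g : E3 ≃ₗᵢ[ℝ] E3) x = x) → x = 0)
    (v : E3) (hv : ‖v‖ = 1) (u : E3) (hu : ‖u‖ = 1)
    (hg0 : ∃ g₀ : G, u = -((g₀ : E3 ≃ₗᵢ[ℝ] E3) v))
    (hstab : ∀ x : E3, (inner ℝ x u : ℝ) = 0 →
      (∀ g : G, (g : E3 ≃ₗᵢ[ℝ] E3) u = u → (g : E3 ≃ₗᵢ[ℝ] E3) x = x) → x = 0) :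
    ∃ V ∈ nhdsWithin u (Metric.sphere (0 : E3) 1), V ⊆ Metric.sphere (0 : E3) 1 ∧
      ∀ w ∈ V, w ≠ u →
        (∑ g : G, Real.negMulLog ((1 + (inner ℝ ((g : E3 ≃ₗᵢ[ℝ] E3) u) v : ℝ)) / 2)) <
        (∑ g : G, Real.negMulLog ((1 + (inner ℝ ((g : E3 ≃ₗᵢ[ℝ] E3) w) v : ℝ)) / 2)) := by
  classical
  obtain ⟨g₀, hg₀⟩ := hg0
  have hbad0 : ((g₀⁻¹ : G) : E3 ≃ₗᵢ[ℝ] E3) u = -v := by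
    have h1 : ((g₀⁻¹ : G) : E3 ≃ₗᵢ[ℝ] E3) u = (g₀ : E3 ≃ₗᵢ[ℝ] E3).symm u := rfl
    rw [h1, hg₀, map_neg, LinearIsometryEquiv.symm_apply_apply]
  set a : G → ℝ := fun g => (inner ℝ ((g : E3 ≃ₗᵢ[ℝ] E3) u) v : ℝ) with ha
  have hnormgu : ∀ g : G, ‖(g : E3 ≃ₗᵢ[ℝ] E3) u‖ = 1 := fun g => by
    rw [LinearIsometryEquiv.norm_map]; exact hu
  have habs_a : ∀ g : G, |a g| ≤ 1 := fun g => by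
    have := abs_real_inner_le_norm ((g : E3 ≃ₗᵢ[ℝ] E3) u) v
    rwa [hnormgu g, hv, one_mul] at this
  have hgood_pos : ∀ g : G, (g : E3 ≃ₗᵢ[ℝ] E3) u ≠ -v → 0 < (1 + a g)/2 := by
    intro g hne
    rcases lt_or_eq_of_le (neg_le_of_abs_le (habs_a g)) with h | h
    · linarith
    · exfalso; apply hne
      have h' : (inner ℝ ((g : E3 ≃ₗᵢ[ℝ] E3) u) v : ℝ) = -1 := h.symm
      have hz : ‖(g : E3 ≃ₗᵢ[ℝ] E3) u + v‖^2 = 0 := by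
        rw [norm_add_sq_real, hnormgu g, hv, h']; ring
      have hz2 : (g : E3 ≃ₗᵢ[ℝ] E3) u + v = 0 := norm_eq_zero.mp (sq_eq_zero_iff.mp hz)
      exact eq_neg_of_add_eq_zero_left hz2
  -- δ : uniform positive lower bound for the "good" arguments
  set σ : G → ℝ := fun g => if (g : E3 ≃ₗᵢ[ℝ] E3) u = -v then (1:ℝ) else (1 + a g)/2 with hσ
  set δ : ℝ := Finset.univ.inf' Finset.univ_nonempty σ with hδ
  have hδpos : 0 < δ := by
    rw [hδ, Finset.lt_inf'_iff]
    intro g _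
    by_cases hb : (g : E3 ≃ₗᵢ[ℝ] E3) u = -v
    · simp [hσ, hb]
    · simpa [hσ, hb] using hgood_pos g hb
  have hδle : ∀ g : G, (g : E3 ≃ₗᵢ[ℝ] E3) u ≠ -v → δ ≤ (1 + a g)/2 := by
    intro g hb
    have := Finset.inf'_le σ (Finset.mem_univ g)
    rw [← hδ] at this
    simpa [hσ, hb] using this
  -- the coefficient function and the invariant vector ξ
  set c : G → ℝ := fun g =>
    if (g : E3 ≃ₗᵢ[ℝ] E3) u = -v then 0 else (Real.log ((1 + a g)/2) + 1)/2 with hc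
  set ξ : E3 := ∑ g : G, c g • ((g⁻¹ : G) : E3 ≃ₗᵢ[ℝ] E3) v with hξ
  have hinvξ : ∀ h : G, (h : E3 ≃ₗᵢ[ℝ] E3) u = u → (h : E3 ≃ₗᵢ[ℝ] E3) ξ = ξ := by
    intro h hh
    have hhinv : ((h⁻¹ : G) : E3 ≃ₗᵢ[ℝ] E3) u = u := by
      have h2 : (h : E3 ≃ₗᵢ[ℝ] E3).symm ((h : E3 ≃ₗᵢ[ℝ] E3) u)
          = (h : E3 ≃ₗᵢ[ℝ] E3).symm u := congrArg _ hh
      rw [LinearIsometryEquiv.symm_apply_apply] at h2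
      exact h2.symm
    have step1 : (h : E3 ≃ₗᵢ[ℝ] E3) ξ
        = ∑ g : G, c g • (h : E3 ≃ₗᵢ[ℝ] E3) (((g⁻¹ : G) : E3 ≃ₗᵢ[ℝ] E3) v) := by
      rw [hξ]; simp [map_sum, map_smul]
    rw [step1, hξ]
    apply Fintype.sum_equiv (Equiv.mulRight h⁻¹)
    intro g
    have hgu : ((g * h⁻¹ : G) : E3 ≃ₗᵢ[ℝ] E3) u = (g : E3 ≃ₗᵢ[ℝ] E3) u := by
      show (g : E3 ≃ₗᵢ[ℝ] E3) (((h⁻¹ : G) : E3 ≃ₗᵢ[ℝ] E3) u) = _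
      rw [hhinv]
    have hcc : c (g * h⁻¹) = c g := by
      rw [hc]; simp only [ha]; rw [hgu]
    have hvv : (((g * h⁻¹)⁻¹ : G) : E3 ≃ₗᵢ[ℝ] E3) v
        = (h : E3 ≃ₗᵢ[ℝ] E3) (((g⁻¹ : G) : E3 ≃ₗᵢ[ℝ] E3) v) := by
      have : ((g * h⁻¹ : G))⁻¹ = h * g⁻¹ := by rw [mul_inv_rev, inv_inv]
      rw [this]; rfl
    rw [show (Equiv.mulRight h⁻¹) g = g * h⁻¹ from rfl, hcc, hvv]
  -- ξ is a multiple of u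
  set lam : ℝ := (inner ℝ ξ u : ℝ) with hlam
  have hξu : ξ = lam • u := by
    have hz := hstab (ξ - lam • u) ?_ ?_
    · rw [sub_eq_zero] at hz; exact hz
    · rw [inner_sub_left, real_inner_smul_left, real_inner_self_eq_norm_sq, hu]
      rw [hlam]; ring
    · intro g hg
      rw [map_sub, map_smul, hinvξ g hg, hg]
  -- constants
  set N : ℝ := (Fintype.card G : ℝ) with hN
  set K : ℝ := lam/2 - N/(4*δ) with hK
  set ε : ℝ := min (min δ 1) (2*Real.exp (2*K)) with hε
  have hεpos : 0 < ε := by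
    rw [hε]
    have := Real.exp_pos (2*K)
    positivity
  refine ⟨Metric.sphere 0 1 ∩ Metric.ball u ε, ?_, Set.inter_subset_left, ?_⟩
  · exact Filter.inter_mem self_mem_nhdsWithin
      (mem_nhdsWithin_of_mem_nhds (Metric.ball_mem_nhds u hεpos))
  intro w hw hwne
  obtain ⟨hwsph, hwball⟩ := hw
  have hwnorm : ‖w‖ = 1 := by simpa using mem_sphere_zero_iff_norm.mp hwsph
  set r : ℝ := ‖w - u‖ with hr
  have hrpos : 0 < r := by rw [hr]; exact norm_sub_pos_iff.mpr hwne
  have hrε : r < ε := by rw [hr, ← dist_eq_norm]; exact Metric.mem_ball.mp hwball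
  have hεδ : ε ≤ δ := (min_le_left _ _).trans (min_le_left _ _)
  have hε1 : ε ≤ 1 := (min_le_left _ _).trans (min_le_right _ _)
  have hwu : (inner ℝ w u : ℝ) = 1 - r^2/2 := by
    have h := norm_sub_sq_real w u
    rw [hwnorm, hu, ← hr] at h
    linarith [h]
  -- per-term lower bound
  have hterm : ∀ g : G,
      -(inner ℝ (w - u) (c g • ((g⁻¹ : G) : E3 ≃ₗᵢ[ℝ] E3) v) : ℝ)
        + (if (g : E3 ≃ₗᵢ[ℝ] E3) u = -v then Real.negMulLog (r^2/4) else -(r^2/(4*δ)))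
      ≤ Real.negMulLog ((1 + (inner ℝ ((g : E3 ≃ₗᵢ[ℝ] E3) w) v : ℝ))/2)
        - Real.negMulLog ((1 + a g)/2) := by
    intro g
    by_cases hb : (g : E3 ≃ₗᵢ[ℝ] E3) u = -v
    · have hcg : c g = 0 := by rw [hc]; simp [hb]
      have hag : a g = -1 := by
        show (inner ℝ ((g : E3 ≃ₗᵢ[ℝ] E3) u) v : ℝ) = -1
        rw [hb, inner_neg_left, real_inner_self_eq_norm_sq, hv]; norm_num
      have hgw : (inner ℝ ((g : E3 ≃ₗᵢ[ℝ] E3) w) v : ℝ) = r^2/2 - 1 := by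
        have e1 : (inner ℝ ((g : E3 ≃ₗᵢ[ℝ] E3) w) ((g : E3 ≃ₗᵢ[ℝ] E3) u) : ℝ) = inner ℝ w u :=
          LinearIsometryEquiv.inner_map_map _ _ _
        rw [hb, inner_neg_right, hwu] at e1
        linarith
      rw [if_pos hb, hcg, hag, hgw]
      have e2 : (1 + (r^2/2 - 1))/2 = r^2/4 := by ring
      have e3 : (1 + (-1:ℝ))/2 = 0 := by norm_num
      rw [e2, e3, Real.negMulLog_zero]
      simp
    · have hcg : c g = (Real.log ((1 + a g)/2) + 1)/2 := by rw [hc]; simp [hb]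
      have hsδ : δ ≤ (1 + a g)/2 := hδle g hb
      set ip : ℝ := (inner ℝ (w - u) (((g⁻¹ : G) : E3 ≃ₗᵢ[ℝ] E3) v) : ℝ) with hip
      have e1 : (inner ℝ ((g : E3 ≃ₗᵢ[ℝ] E3) (w - u)) v : ℝ) = ip := by
        rw [hip]
        have e0 : v = (g : E3 ≃ₗᵢ[ℝ] E3) (((g⁻¹ : G) : E3 ≃ₗᵢ[ℝ] E3) v) :=
          (LinearIsometryEquiv.apply_symm_apply (g : E3 ≃ₗᵢ[ℝ] E3) v).symm
        conv_lhs => rw [e0]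
        exact LinearIsometryEquiv.inner_map_map _ _ _
      have hdiff : (1 + (inner ℝ ((g : E3 ≃ₗᵢ[ℝ] E3) w) v : ℝ))/2 = (1 + a g)/2 + ip/2 := by
        have e4 : (g : E3 ≃ₗᵢ[ℝ] E3) w = (g : E3 ≃ₗᵢ[ℝ] E3) u + (g : E3 ≃ₗᵢ[ℝ] E3) (w - u) := by
          rw [← map_add]; congr 1; abel
        rw [e4, inner_add_left, e1]
        show (1 + ((inner ℝ ((g : E3 ≃ₗᵢ[ℝ] E3) u) v : ℝ) + ip))/2 = _
        ring
      have habs : |ip| ≤ r := by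
        have h5 := abs_real_inner_le_norm (w - u) (((g⁻¹ : G) : E3 ≃ₗᵢ[ℝ] E3) v)
        rw [LinearIsometryEquiv.norm_map, hv, mul_one, ← hr] at h5
        exact h5
      have htpos : 0 < (1 + (inner ℝ ((g : E3 ≃ₗᵢ[ℝ] E3) w) v : ℝ))/2 := by
        rw [hdiff]
        have := abs_le.mp habs
        linarith [this.1]
      have htay := eta_taylor hδpos hsδ htpos
      have e6 : (1 + (inner ℝ ((g : E3 ≃ₗᵢ[ℝ] E3) w) v : ℝ))/2 - (1 + a g)/2 = ip/2 := by
        rw [hdiff]; ring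
      rw [e6] at htay
      rw [if_neg hb, real_inner_smul_right, hcg]
      have hip2 : ip^2 ≤ r^2 := by
        have := abs_le.mp habs
        nlinarith [this.1, this.2]
      have h5 : (ip/2)^2/δ ≤ r^2/(4*δ) := by
        have e7 : r^2/(4*δ) - (ip/2)^2/δ = (r^2 - ip^2)/(4*δ) := by ring
        have h8 : 0 ≤ (r^2 - ip^2)/(4*δ) :=
          div_nonneg (sub_nonneg.mpr hip2) (by positivity)
        linarith
      have e7 : (Real.log ((1 + a g)/2) + 1)/2 * ip
          = (Real.log ((1 + a g)/2) + 1) * (ip/2) := by ring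
      linarith [htay, h5, e7]
  -- sum the bounds
  have hsum := Finset.sum_le_sum (fun g (_ : g ∈ Finset.univ) => hterm g)
  rw [Finset.sum_sub_distrib, Finset.sum_add_distrib] at hsum
  have hlin : (∑ g : G, -(inner ℝ (w - u) (c g • ((g⁻¹ : G) : E3 ≃ₗᵢ[ℝ] E3) v) : ℝ))
      = lam * (r^2/2) := by
    rw [Finset.sum_neg_distrib, ← inner_sum, ← hξ, hξu, real_inner_smul_right,
      inner_sub_left, hwu, real_inner_self_eq_norm_sq, hu]
    ring
  have hifsum : Real.negMulLog (r^2/4) - N * (r^2/(4*δ))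
      ≤ ∑ g : G, (if (g : E3 ≃ₗᵢ[ℝ] E3) u = -v
          then Real.negMulLog (r^2/4) else -(r^2/(4*δ))) := by
    have hφlb : ∀ g : G, -(r^2/(4*δ)) ≤ (if (g : E3 ≃ₗᵢ[ℝ] E3) u = -v
        then Real.negMulLog (r^2/4) else -(r^2/(4*δ))) := by
      intro g
      by_cases hb : (g : E3 ≃ₗᵢ[ℝ] E3) u = -v
      · rw [if_pos hb]
        have h01 : 0 ≤ r^2/4 := by positivity
        have h11 : r^2/4 ≤ 1 := by nlinarith [hrε, hε1, hrpos]
        have h12 := Real.negMulLog_nonneg h01 h11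
        have h13 : (0:ℝ) ≤ r^2/(4*δ) := by positivity
        linarith
      · rw [if_neg hb]
    rw [← Finset.add_sum_erase _ _ (Finset.mem_univ (g₀⁻¹)), if_pos hbad0]
    have hcard : ((Finset.univ.erase (g₀⁻¹ : G)).card : ℝ) ≤ N := by
      rw [hN]
      have := Finset.card_le_card (Finset.erase_subset (g₀⁻¹ : G) Finset.univ)
      rw [← Finset.card_univ]
      exact_mod_cast this
    have hsum2 : ((Finset.univ.erase (g₀⁻¹ : G)).card : ℝ) * (-(r^2/(4*δ)))
        ≤ ∑ g ∈ Finset.univ.erase (g₀⁻¹ : G), (if (g : E3 ≃ₗᵢ[ℝ] E3) u = -v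
            then Real.negMulLog (r^2/4) else -(r^2/(4*δ))) := by
      have h14 := Finset.card_nsmul_le_sum (Finset.univ.erase (g₀⁻¹ : G)) _ _
        (fun g _ => hφlb g)
      simpa [nsmul_eq_mul] using h14
    have h15 : N * (-(r^2/(4*δ))) ≤ ((Finset.univ.erase (g₀⁻¹ : G)).card : ℝ) * (-(r^2/(4*δ))) := by
      apply mul_le_mul_of_nonpos_right hcard
      have : (0:ℝ) ≤ r^2/(4*δ) := by positivity
      linarith
    linarith
  have hkey : Real.negMulLog (r^2/4) + K * r^2
      ≤ (∑ g : G, Real.negMulLog ((1 + (inner ℝ ((g : E3 ≃ₗᵢ[ℝ] E3) w) v : ℝ))/2))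
        - (∑ g : G, Real.negMulLog ((1 + a g)/2)) := by
    have e8 : lam * (r^2/2) + (Real.negMulLog (r^2/4) - N * (r^2/(4*δ)))
        = Real.negMulLog (r^2/4) + K * r^2 := by rw [hK]; ring
    linarith [hsum, hlin, hifsum]
  have hpos : 0 < Real.negMulLog (r^2/4) + K * r^2 := by
    have hr2 : r < 2*Real.exp (2*K) := lt_of_lt_of_le hrε (min_le_right _ _)
    have hexp : Real.exp (2*K) * Real.exp (2*K) = Real.exp (4*K) := by
      rw [← Real.exp_add]; ring_nf
    have hlog : Real.log (r^2/4) < 4*K := by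
      rw [Real.log_lt_iff_lt_exp (by positivity)]
      nlinarith [hr2, hrpos, Real.exp_pos (2*K), hexp]
    have e9 : Real.negMulLog (r^2/4) = r^2 * (-(Real.log (r^2/4))/4) := by
      rw [Real.negMulLog]; ring
    rw [e9]
    have h16 : 0 < -(Real.log (r^2/4))/4 + K := by linarith
    nlinarith [mul_pos (pow_pos hrpos 2) h16]
  have e10 : (∑ g : G, Real.negMulLog ((1 + (inner ℝ ((g : E3 ≃ₗᵢ[ℝ] E3) u) v : ℝ))/2))
      = ∑ g : G, Real.negMulLog ((1 + a g)/2) := by simp only [ha]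
  rw [e10]
  linarith [hkey, hpos]
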